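/- Let G be a connected bipartite finite simple graph with Δ(G) ≥ 3 satisfying γ_3(G) = γ(G) + 1, and let D be a minimum 3-dominating set of G. Let H be the simple graph on vertex set D in which two distinct vertices u, v are adjacent if and only if their distance in G is at most 2. Then H is a threshold graph; equivalently, H contains no induced subgraph isomorphic to 2K_2 (two disjoint edges on four vertices), P_4 (the path on four vertices), or C_4 (the cycle on four vertices). -/

import Mathlib

/-- `D` is a `k`-dominating set of `G`: every vertex outside `D` has
at least `k` neighbors in `D`. -/
def IsKDomSet {V : Type*} (G : SimpleGraph V) (k : ℕ) (D : Set V) : Prop :=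
  ∀ v ∉ D, k ≤ (G.neighborSet v ∩ D).ncard

/-- The `k`-domination number: minimum cardinality of a `k`-dominating set. -/
noncomputable def kdomNum {V : Type*} (G : SimpleGraph V) (k : ℕ) : ℕ :=
  sInf {n | ∃ D : Set V, IsKDomSet G k D ∧ D.ncard = n}

/-- The graph on the vertex set `D` in which two distinct vertices are
adjacent iff their distance in `G` is at most 2. -/
def distTwoGraph {V : Type*} (G : SimpleGraph V) (D : Set V) : SimpleGraph D where
  Adj u v := u ≠ v ∧ G.dist u v ≤ 2
  symm := by
    constructor
    intro u v h
    exact ⟨h.1.symm, by rw [SimpleGraph.dist_comm]; exact h.2⟩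
  loopless := ⟨fun u h => h.1 rfl⟩

/-- `u` and `v` are at distance at most 2 "witnessed combinatorially". -/
def Close {V : Type*} (G : SimpleGraph V) (u v : V) : Prop :=
  G.Adj u v ∨ ∃ w, G.Adj u w ∧ G.Adj w v

lemma close_symm {V : Type*} {G : SimpleGraph V} {u v : V} (h : Close G u v) :
    Close G v u := by
  rcases h with h | ⟨w, h1, h2⟩
  · exact Or.inl h.symm
  · exact Or.inr ⟨w, h2.symm, h1.symm⟩

lemma close_dist_le {V : Type*} {G : SimpleGraph V} {u v : V} (h : Close G u v) :
    G.dist u v ≤ 2 := by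
  rcases h with h | ⟨w, h1, h2⟩
  · exact (SimpleGraph.dist_le h.toWalk).trans (by simp)
  · exact (SimpleGraph.dist_le (h1.toWalk.append h2.toWalk)).trans (by simp)

lemma close_of_dist {V : Type*} {G : SimpleGraph V} {u v : V} (hr : G.Reachable u v)
    (hne : u ≠ v) (h : G.dist u v ≤ 2) : Close G u v := by
  obtain ⟨p, hp⟩ := hr.exists_walk_length_eq_dist
  have hlen : p.length ≤ 2 := by rw [hp]; exact h
  cases p with
  | nil => exact absurd rfl hne
  | cons h1 q =>
    cases q with
    | nil => exact Or.inl h1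
    | cons h2 r =>
      cases r with
      | nil => exact Or.inr ⟨_, h1, h2⟩
      | cons h3 s => simp at hlen

lemma one_le_of_mem {V : Type*} {G : SimpleGraph V} {S : Set V} {v z : V}
    [Fintype V] (hz : G.Adj v z) (hzS : z ∈ S) :
    1 ≤ (G.neighborSet v ∩ S).ncard := by
  have h : (G.neighborSet v ∩ S).Nonempty := ⟨z, hz, hzS⟩
  have := (Set.ncard_pos (Set.toFinite (G.neighborSet v ∩ S))).mpr h
  omega

lemma not_subset_pair {V : Type*} [Fintype V] {G : SimpleGraph V} {D : Set V}
    (hD : IsKDomSet G 3 D) {v p q : V} (hv : v ∉ D)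
    (hsub : G.neighborSet v ∩ D ⊆ {p, q}) : False := by
  have h3 := hD v hv
  have h1 : (G.neighborSet v ∩ D).ncard ≤ ({p, q} : Set V).ncard :=
    Set.ncard_le_ncard hsub (Set.toFinite _)
  have h2 : ({p, q} : Set V).ncard ≤ 2 := by
    have := Set.ncard_insert_le p ({q} : Set V)
    simp at this; omega
  omega

lemma small_dom {V : Type*} [Fintype V] (G : SimpleGraph V)
    (heq : kdomNum G 3 = kdomNum G 1 + 1)
    (D : Set V) (hmin : D.ncard = kdomNum G 3)
    (S : Set V) (hS : IsKDomSet G 1 S) (hcard : S.ncard + 2 ≤ D.ncard) : False := by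
  have h1 : kdomNum G 1 ≤ S.ncard := Nat.sInf_le ⟨S, hS, rfl⟩
  omega

lemma H1 {V : Type*} [Fintype V] (G : SimpleGraph V)
    (heq : kdomNum G 3 = kdomNum G 1 + 1)
    (D : Set V) (hD : IsKDomSet G 3 D) (hmin : D.ncard = kdomNum G 3)
    (a c b' d' : V) (ha : a ∈ D) (hc : c ∈ D) (hb' : b' ∈ D) (hd' : d' ∈ D)
    (hac : a ≠ c) (hb'a : b' ≠ a) (hb'c : b' ≠ c) (hd'a : d' ≠ a) (hd'c : d' ≠ c)
    (hab : G.Adj a b') (hcd : G.Adj c d') : False := by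
  set S := D \ {a, c} with hSdef
  have hS : IsKDomSet G 1 S := by
    intro v hv
    by_cases hvD : v ∈ D
    · have hv2 : v = a ∨ v = c := by
        by_contra h
        push_neg at h
        exact hv ⟨hvD, by simp [h.1, h.2]⟩
      rcases hv2 with rfl | rfl
      · exact one_le_of_mem hab ⟨hb', by simp [hb'a, hb'c]⟩
      · exact one_le_of_mem hcd ⟨hd', by simp [hd'a, hd'c]⟩
    · obtain ⟨z, hz, hzR⟩ : ∃ z ∈ G.neighborSet v ∩ D, z ∉ ({a, c} : Set V) := by
        by_contra h
        push_neg at h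
        exact not_subset_pair hD hvD h
      exact one_le_of_mem hz.1 ⟨hz.2, hzR⟩
  have h0 : 0 < D.ncard := (Set.ncard_pos (Set.toFinite D)).mpr ⟨a, ha⟩
  have h1 : (D \ {a}).ncard = D.ncard - 1 := Set.ncard_diff_singleton_of_mem ha
  have hcD : c ∈ D \ {a} := ⟨hc, by simp [Ne.symm hac]⟩
  have h1p : 0 < (D \ {a}).ncard := (Set.ncard_pos (Set.toFinite _)).mpr ⟨c, hcD⟩
  have h2 : ((D \ {a}) \ {c}).ncard = (D \ {a}).ncard - 1 :=
    Set.ncard_diff_singleton_of_mem hcD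
  have hSeq : S = (D \ {a}) \ {c} := by
    ext x; simp [hSdef]; tauto
  exact small_dom G heq D hmin S hS (by rw [hSeq]; omega)

lemma H2 {V : Type*} [Fintype V] (G : SimpleGraph V)
    (heq : kdomNum G 3 = kdomNum G 1 + 1)
    (D : Set V) (hD : IsKDomSet G 3 D) (hmin : D.ncard = kdomNum G 3)
    (a c d b' y : V) (ha : a ∈ D) (hc : c ∈ D) (hd : d ∈ D) (hb' : b' ∈ D)
    (hac : a ≠ c) (had : a ≠ d) (hcd : c ≠ d)
    (hb'a : b' ≠ a) (hb'c : b' ≠ c) (hb'd : b' ≠ d)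
    (hy : y ∉ D) (hyc : G.Adj y c) (hyd : G.Adj y d) (hab : G.Adj a b')
    (hfar : ¬ Close G a c) : False := by
  set S := insert y (D \ {a, c, d}) with hSdef
  have hS : IsKDomSet G 1 S := by
    intro v hv
    have hvy : v ≠ y := fun h => hv (h ▸ Set.mem_insert y _)
    by_cases hvD : v ∈ D
    · have hv2 : v = a ∨ v = c ∨ v = d := by
        by_contra h
        push_neg at h
        exact hv (Set.mem_insert_of_mem _ ⟨hvD, by simp [h.1, h.2.1, h.2.2]⟩)
      rcases hv2 with rfl | rfl | rfl
      · exact one_le_of_mem hab (Set.mem_insert_of_mem _ ⟨hb', by simp [hb'a, hb'c, hb'd]⟩)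
      · exact one_le_of_mem hyc.symm (Set.mem_insert _ _)
      · exact one_le_of_mem hyd.symm (Set.mem_insert _ _)
    · obtain ⟨z, hz, hzR⟩ : ∃ z ∈ G.neighborSet v ∩ D, z ∉ ({a, c, d} : Set V) := by
        by_contra h
        push_neg at h
        by_cases hva : G.Adj v a
        · have hvc : ¬ G.Adj v c := fun hh => hfar (Or.inr ⟨v, hva.symm, hh⟩)
          refine not_subset_pair hD hvD (p := a) (q := d) ?_
          intro z hz
          rcases h z hz with rfl | rfl | rfl
          · exact Set.mem_insert _ _
          · exact absurd hz.1 hvc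
          · simp
        · refine not_subset_pair hD hvD (p := c) (q := d) ?_
          intro z hz
          rcases h z hz with rfl | rfl | rfl
          · exact absurd hz.1 hva
          · exact Set.mem_insert _ _
          · simp
      exact one_le_of_mem hz.1 (Set.mem_insert_of_mem _ ⟨hz.2, hzR⟩)
  -- cardinality
  have h1 : (D \ {a}).ncard = D.ncard - 1 := Set.ncard_diff_singleton_of_mem ha
  have hcD : c ∈ D \ {a} := ⟨hc, by simp [Ne.symm hac]⟩
  have h2 : ((D \ {a}) \ {c}).ncard = (D \ {a}).ncard - 1 :=
    Set.ncard_diff_singleton_of_mem hcD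
  have hdD : d ∈ (D \ {a}) \ {c} := ⟨⟨hd, by simp [Ne.symm had]⟩, by simp [Ne.symm hcd]⟩
  have h3 : (((D \ {a}) \ {c}) \ {d}).ncard = ((D \ {a}) \ {c}).ncard - 1 :=
    Set.ncard_diff_singleton_of_mem hdD
  have h0 : 0 < D.ncard := (Set.ncard_pos (Set.toFinite D)).mpr ⟨a, ha⟩
  have h1p : 0 < (D \ {a}).ncard := (Set.ncard_pos (Set.toFinite _)).mpr ⟨c, hcD⟩
  have h2p : 0 < ((D \ {a}) \ {c}).ncard := (Set.ncard_pos (Set.toFinite _)).mpr ⟨d, hdD⟩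
  have hEq : D \ {a, c, d} = ((D \ {a}) \ {c}) \ {d} := by
    ext x; simp; tauto
  have hIns : S.ncard ≤ (D \ {a, c, d}).ncard + 1 := Set.ncard_insert_le _ _
  rw [hEq] at hIns
  exact small_dom G heq D hmin S hS (by omega)

lemma H3 {V : Type*} [Fintype V] (G : SimpleGraph V)
    (heq : kdomNum G 3 = kdomNum G 1 + 1)
    (D : Set V) (hD : IsKDomSet G 3 D) (hmin : D.ncard = kdomNum G 3)
    (a b c d x y : V) (ha : a ∈ D) (hb : b ∈ D) (hc : c ∈ D) (hd : d ∈ D)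
    (hab : a ≠ b) (hac : a ≠ c) (had : a ≠ d) (hbc : b ≠ c) (hbd : b ≠ d) (hcd : c ≠ d)
    (hx : x ∉ D) (hxa : G.Adj x a) (hxb : G.Adj x b)
    (hy : y ∉ D) (hyc : G.Adj y c) (hyd : G.Adj y d)
    (hfac : ¬ Close G a c) (hfbd : ¬ Close G b d) : False := by
  set S := insert x (insert y (D \ {a, b, c, d})) with hSdef
  have hS : IsKDomSet G 1 S := by
    intro v hv
    have hvx : v ≠ x := fun h => hv (h ▸ Set.mem_insert x _)
    have hvy : v ≠ y := fun h => hv (h ▸ Set.mem_insert_of_mem _ (Set.mem_insert y _))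
    by_cases hvD : v ∈ D
    · have hv2 : v = a ∨ v = b ∨ v = c ∨ v = d := by
        by_contra h
        push_neg at h
        exact hv (Set.mem_insert_of_mem _ (Set.mem_insert_of_mem _
          ⟨hvD, by simp [h.1, h.2.1, h.2.2.1, h.2.2.2]⟩))
      have hxS : x ∈ S := Set.mem_insert x _
      have hyS : y ∈ S := Set.mem_insert_of_mem _ (Set.mem_insert y _)
      rcases hv2 with rfl | rfl | rfl | rfl
      · exact one_le_of_mem hxa.symm hxS
      · exact one_le_of_mem hxb.symm hxS
      · exact one_le_of_mem hyc.symm hyS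
      · exact one_le_of_mem hyd.symm hyS
    · obtain ⟨z, hz, hzR⟩ : ∃ z ∈ G.neighborSet v ∩ D, z ∉ ({a, b, c, d} : Set V) := by
        by_contra h
        push_neg at h
        by_cases hva : G.Adj v a
        · have hvc : ¬ G.Adj v c := fun hh => hfac (Or.inr ⟨v, hva.symm, hh⟩)
          by_cases hvb : G.Adj v b
          · have hvd : ¬ G.Adj v d := fun hh => hfbd (Or.inr ⟨v, hvb.symm, hh⟩)
            refine not_subset_pair hD hvD (p := a) (q := b) ?_
            intro z hz
            rcases h z hz with rfl | rfl | rfl | rfl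
            · exact Set.mem_insert _ _
            · simp
            · exact absurd hz.1 hvc
            · exact absurd hz.1 hvd
          · refine not_subset_pair hD hvD (p := a) (q := d) ?_
            intro z hz
            rcases h z hz with rfl | rfl | rfl | rfl
            · exact Set.mem_insert _ _
            · exact absurd hz.1 hvb
            · exact absurd hz.1 hvc
            · simp
        · by_cases hvb : G.Adj v b
          · have hvd : ¬ G.Adj v d := fun hh => hfbd (Or.inr ⟨v, hvb.symm, hh⟩)
            refine not_subset_pair hD hvD (p := b) (q := c) ?_
            intro z hz
            rcases h z hz with rfl | rfl | rfl | rfl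
            · exact absurd hz.1 hva
            · exact Set.mem_insert _ _
            · simp
            · exact absurd hz.1 hvd
          · refine not_subset_pair hD hvD (p := c) (q := d) ?_
            intro z hz
            rcases h z hz with rfl | rfl | rfl | rfl
            · exact absurd hz.1 hva
            · exact absurd hz.1 hvb
            · exact Set.mem_insert _ _
            · simp
      exact one_le_of_mem hz.1
        (Set.mem_insert_of_mem _ (Set.mem_insert_of_mem _ ⟨hz.2, hzR⟩))
  -- cardinality
  have h1 : (D \ {a}).ncard = D.ncard - 1 := Set.ncard_diff_singleton_of_mem ha
  have hbD : b ∈ D \ {a} := ⟨hb, by simp [Ne.symm hab]⟩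
  have h2 : ((D \ {a}) \ {b}).ncard = (D \ {a}).ncard - 1 :=
    Set.ncard_diff_singleton_of_mem hbD
  have hcD : c ∈ (D \ {a}) \ {b} := ⟨⟨hc, by simp [Ne.symm hac]⟩, by simp [Ne.symm hbc]⟩
  have h3 : (((D \ {a}) \ {b}) \ {c}).ncard = ((D \ {a}) \ {b}).ncard - 1 :=
    Set.ncard_diff_singleton_of_mem hcD
  have hdD : d ∈ ((D \ {a}) \ {b}) \ {c} :=
    ⟨⟨⟨hd, by simp [Ne.symm had]⟩, by simp [Ne.symm hbd]⟩, by simp [Ne.symm hcd]⟩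
  have h4 : ((((D \ {a}) \ {b}) \ {c}) \ {d}).ncard = (((D \ {a}) \ {b}) \ {c}).ncard - 1 :=
    Set.ncard_diff_singleton_of_mem hdD
  have h0 : 0 < D.ncard := (Set.ncard_pos (Set.toFinite D)).mpr ⟨a, ha⟩
  have h1p : 0 < (D \ {a}).ncard := (Set.ncard_pos (Set.toFinite _)).mpr ⟨b, hbD⟩
  have h2p : 0 < ((D \ {a}) \ {b}).ncard := (Set.ncard_pos (Set.toFinite _)).mpr ⟨c, hcD⟩
  have h3p : 0 < (((D \ {a}) \ {b}) \ {c}).ncard :=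
    (Set.ncard_pos (Set.toFinite _)).mpr ⟨d, hdD⟩
  have hEq : D \ {a, b, c, d} = (((D \ {a}) \ {b}) \ {c}) \ {d} := by
    ext z; simp; tauto
  have hIns1 : (insert y (D \ {a, b, c, d})).ncard ≤ (D \ {a, b, c, d}).ncard + 1 :=
    Set.ncard_insert_le _ _
  have hIns2 : S.ncard ≤ (insert y (D \ {a, b, c, d})).ncard + 1 := Set.ncard_insert_le _ _
  rw [hEq] at hIns1 hIns2
  exact small_dom G heq D hmin S hS (by omega)

lemma extract {V : Type*} {G : SimpleGraph V} {D : Set V} {a b c d : V}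
    (hb : b ∈ D) (hba : b ≠ a) (hbc : b ≠ c) (hbd' : b ≠ d)
    (hab : Close G a b) (hac : ¬ Close G a c) (hbd : ¬ Close G b d) :
    (∃ b', b' ∈ D ∧ b' ≠ a ∧ b' ≠ c ∧ b' ≠ d ∧ G.Adj a b') ∨
    (∃ x, x ∉ D ∧ G.Adj x a ∧ G.Adj x b) := by
  rcases hab with h | ⟨w, h1, h2⟩
  · exact Or.inl ⟨b, hb, hba, hbc, hbd', h⟩
  · by_cases hw : w ∈ D
    · refine Or.inl ⟨w, hw, h1.ne', ?_, ?_, h1⟩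
      · rintro rfl; exact hac (Or.inl h1)
      · rintro rfl; exact hbd (Or.inl h2.symm)
    · exact Or.inr ⟨w, hw, h1.symm, h2⟩

lemma no_altC4 {V : Type*} [Fintype V] (G : SimpleGraph V)
    (heq : kdomNum G 3 = kdomNum G 1 + 1)
    (D : Set V) (hD : IsKDomSet G 3 D) (hmin : D.ncard = kdomNum G 3)
    (a b c d : V) (ha : a ∈ D) (hb : b ∈ D) (hc : c ∈ D) (hd : d ∈ D)
    (hab' : a ≠ b) (hac' : a ≠ c) (had' : a ≠ d) (hbc' : b ≠ c) (hbd' : b ≠ d)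
    (hcd' : c ≠ d)
    (hab : Close G a b) (hcd : Close G c d)
    (hac : ¬ Close G a c) (hbd : ¬ Close G b d) : False := by
  have hca : ¬ Close G c a := fun h => hac (close_symm h)
  have hdb : ¬ Close G d b := fun h => hbd (close_symm h)
  have e1 := extract hb hab'.symm hbc' hbd' hab hac hbd
  have e2 := extract (a := c) (b := d) (c := a) (d := b) hd hcd'.symm had'.symm hbd'.symm
    hcd hca hdb
  rcases e1 with ⟨b', hb'D, hb'a, hb'c, hb'd, hadj1⟩ | ⟨x, hxD, hxa, hxb⟩
  · rcases e2 with ⟨d', hd'D, hd'c, hd'a, hd'b, hadj2⟩ | ⟨y, hyD, hyc, hyd⟩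
    · exact H1 G heq D hD hmin a c b' d' ha hc hb'D hd'D hac' hb'a hb'c hd'a hd'c
        hadj1 hadj2
    · exact H2 G heq D hD hmin a c d b' y ha hc hd hb'D hac' had' hcd'
        hb'a hb'c hb'd hyD hyc hyd hadj1 hac
  · rcases e2 with ⟨d', hd'D, hd'c, hd'a, hd'b, hadj2⟩ | ⟨y, hyD, hyc, hyd⟩
    · exact H2 G heq D hD hmin c a b d' x hc ha hb hd'D hac'.symm hbc'.symm hab'
        hd'c hd'a hd'b hxD hxa hxb hadj2 hca
    · exact H3 G heq D hD hmin a b c d x y ha hb hc hd hab' hac' had' hbc' hbd' hcd'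
        hxD hxa hxb hyD hyc hyd hac hbd

/-- Let `G` be a connected bipartite graph with `Δ(G) ≥ 3` satisfying
`γ_3(G) = γ(G) + 1`, let `D` be a minimum 3-dominating set, and let `H` be
the graph on `D` where two distinct vertices are adjacent iff their distance
in `G` is at most 2. Then `H` is a threshold graph: it has no induced
subgraph isomorphic to `2K_2`, `P_4` or `C_4`. -/
theorem statement19 {V : Type*} [Fintype V] (G : SimpleGraph V) [DecidableRel G.Adj]
    (hconn : G.Connected)
    (hbip : ∃ A : Set V, ∀ u v : V, G.Adj u v → (u ∈ A ↔ v ∉ A))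
    (hΔ : 3 ≤ G.maxDegree)
    (heq : kdomNum G 3 = kdomNum G 1 + 1)
    (D : Set V) (hD : IsKDomSet G 3 D) (hmin : D.ncard = kdomNum G 3) :
    ∀ a b c d : D, a ≠ b → a ≠ c → a ≠ d → b ≠ c → b ≠ d → c ≠ d →
      -- no induced `2K_2` on `a, b, c, d` (edges `ab`, `cd` only)
      ¬((distTwoGraph G D).Adj a b ∧ (distTwoGraph G D).Adj c d ∧
          ¬(distTwoGraph G D).Adj a c ∧ ¬(distTwoGraph G D).Adj a d ∧
          ¬(distTwoGraph G D).Adj b c ∧ ¬(distTwoGraph G D).Adj b d) ∧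
      -- no induced `P_4` on `a, b, c, d` (path `a-b-c-d`)
      ¬((distTwoGraph G D).Adj a b ∧ (distTwoGraph G D).Adj b c ∧
          (distTwoGraph G D).Adj c d ∧ ¬(distTwoGraph G D).Adj a c ∧
          ¬(distTwoGraph G D).Adj a d ∧ ¬(distTwoGraph G D).Adj b d) ∧
      -- no induced `C_4` on `a, b, c, d` (cycle `a-b-c-d-a`)
      ¬((distTwoGraph G D).Adj a b ∧ (distTwoGraph G D).Adj b c ∧
          (distTwoGraph G D).Adj c d ∧ (distTwoGraph G D).Adj a d ∧
          ¬(distTwoGraph G D).Adj a c ∧ ¬(distTwoGraph G D).Adj b d) := by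
  intro a b c d hab hac had hbc hbd hcd
  have toClose : ∀ u v : D, (distTwoGraph G D).Adj u v → Close G ↑u ↑v := by
    intro u v h
    have hne : (u : V) ≠ (v : V) := Subtype.coe_ne_coe.mpr h.1
    exact close_of_dist (hconn.preconnected ↑u ↑v) hne h.2
  have toFar : ∀ u v : D, u ≠ v → ¬(distTwoGraph G D).Adj u v → ¬ Close G ↑u ↑v := by
    intro u v hne hadj hcl
    exact hadj ⟨hne, close_dist_le hcl⟩
  have cab : (a : V) ≠ b := Subtype.coe_ne_coe.mpr hab
  have cac : (a : V) ≠ c := Subtype.coe_ne_coe.mpr hac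
  have cad : (a : V) ≠ d := Subtype.coe_ne_coe.mpr had
  have cbc : (b : V) ≠ c := Subtype.coe_ne_coe.mpr hbc
  have cbd : (b : V) ≠ d := Subtype.coe_ne_coe.mpr hbd
  have ccd : (c : V) ≠ d := Subtype.coe_ne_coe.mpr hcd
  refine ⟨?_, ?_, ?_⟩
  · rintro ⟨h1, h2, h3, h4, h5, h6⟩
    exact no_altC4 G heq D hD hmin a b c d a.2 b.2 c.2 d.2 cab cac cad cbc cbd ccd
      (toClose _ _ h1) (toClose _ _ h2) (toFar _ _ hac h3) (toFar _ _ hbd h6)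
  · rintro ⟨h1, h2, h3, h4, h5, h6⟩
    exact no_altC4 G heq D hD hmin a b c d a.2 b.2 c.2 d.2 cab cac cad cbc cbd ccd
      (toClose _ _ h1) (toClose _ _ h3) (toFar _ _ hac h4) (toFar _ _ hbd h6)
  · rintro ⟨h1, h2, h3, h4, h5, h6⟩
    exact no_altC4 G heq D hD hmin a b c d a.2 b.2 c.2 d.2 cab cac cad cbc cbd ccd
      (toClose _ _ h1) (toClose _ _ h3) (toFar _ _ hac h5) (toFar _ _ hbd h6)
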